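/- For f(r) = 1 - 2m/r + q²/r² (Reissner–Nordström, k = 0) with 0 < q² < m² and 9m² - 8q² ≥ 0, the outer photon-surface radius r₊ = (3m + √(9m²-8q²))/2 satisfies f(r₊) > 0, while the inner radius r₋ = (3m - √(9m²-8q²))/2 satisfies f(r₋) < 0. -/

import Mathlib

/-- Sub-extremal Reissner–Nordström: `f r₊ > 0` and `f r₋ < 0` for the photon
surface radii `r₊, r₋ = (3m ± √(9m²-8q²))/2`, where `f r = 1 - 2m/r + q²/r²`. -/
theorem subextremal_RN_photon_surfaces (m q : ℝ) (hm : 0 < m)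
    (hq : 0 < q ^ 2) (hsub : q ^ 2 < m ^ 2) (hdisc : 9 * m ^ 2 - 8 * q ^ 2 ≥ 0) :
    (1 - 2 * m / ((3 * m + Real.sqrt (9 * m ^ 2 - 8 * q ^ 2)) / 2)
        + q ^ 2 / ((3 * m + Real.sqrt (9 * m ^ 2 - 8 * q ^ 2)) / 2) ^ 2 > 0) ∧
    (1 - 2 * m / ((3 * m - Real.sqrt (9 * m ^ 2 - 8 * q ^ 2)) / 2)
        + q ^ 2 / ((3 * m - Real.sqrt (9 * m ^ 2 - 8 * q ^ 2)) / 2) ^ 2 < 0) := by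
  set s := Real.sqrt (9 * m ^ 2 - 8 * q ^ 2) with hs
  have hs2 : s ^ 2 = 9 * m ^ 2 - 8 * q ^ 2 := Real.sq_sqrt hdisc
  have hs0 : 0 ≤ s := Real.sqrt_nonneg _
  have hsm : m < s := by nlinarith
  have hs3 : s < 3 * m := by nlinarith
  have hp : 0 < (3 * m + s) / 2 := by linarith
  have hn : 0 < (3 * m - s) / 2 := by linarith
  have h1 : 3 * m + s ≠ 0 := by linarith
  have h2 : 3 * m - s ≠ 0 := by linarith
  constructor
  · rw [gt_iff_lt, show (1 - 2 * m / ((3 * m + s) / 2) + q ^ 2 / ((3 * m + s) / 2) ^ 2)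
        = (((3 * m + s) / 2) ^ 2 - 2 * m * ((3 * m + s) / 2) + q ^ 2) / ((3 * m + s) / 2) ^ 2 by
        field_simp]
    apply div_pos _ (by positivity)
    nlinarith
  · rw [show (1 - 2 * m / ((3 * m - s) / 2) + q ^ 2 / ((3 * m - s) / 2) ^ 2)
        = (((3 * m - s) / 2) ^ 2 - 2 * m * ((3 * m - s) / 2) + q ^ 2) / ((3 * m - s) / 2) ^ 2 by
        have h2' : m * 3 - s ≠ 0 := by linarith
        field_simp]
    apply div_neg_of_neg_of_pos _ (by positivity)
    have hms : 3 * m ^ 2 - 2 * q ^ 2 < m * s := by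
      nlinarith [mul_pos hm (hm.trans hsm), sq_nonneg (m * s - (3 * m ^ 2 - 2 * q ^ 2))]
    nlinarith
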